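/- All trades of the optimal strategy have the same sign (Remark 1): Let G : ℝ → ℝ be positive, nonincreasing on [0,∞), and strictly convex on [0,∞), let t₀ < t₁ < ... < t_N be strictly increasing trading times, let M be the impact matrix with entries M_{ij} = G(|t_i − t_j|), and let X₀ > 0. Then every component of M⁻¹𝟙 is strictly positive; consequently every component of the optimal strategy ξ* := −(X₀/(𝟙ᵀM⁻¹𝟙))·M⁻¹𝟙 is strictly negative, i.e., the optimal liquidation strategy consists exclusively of sell trades. -/

import Mathlib

section Tent
open MeasureTheory Set

lemma tent_overlap (a u v : ℝ) :
    ∫ w, (Set.indicator (Set.Ico u (u + a)) (fun _ => (1:ℝ)) w) *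
         (Set.indicator (Set.Ico v (v + a)) (fun _ => (1:ℝ)) w) = max (a - |u - v|) 0 := by
  have h1 : ∀ w, (Set.indicator (Set.Ico u (u + a)) (fun _ => (1:ℝ)) w) *
      (Set.indicator (Set.Ico v (v + a)) (fun _ => (1:ℝ)) w)
      = Set.indicator (Set.Ico u (u+a) ∩ Set.Ico v (v+a)) (fun _ => (1:ℝ)) w := by
    intro w
    rw [← Set.inter_indicator_mul]
    simp
  simp_rw [h1, Set.Ico_inter_Ico]
  rw [show (Set.indicator (Ico (u ⊔ v) ((u + a) ⊓ (v + a))) fun _ => (1:ℝ)) =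
      (Set.indicator (Ico (u ⊔ v) ((u + a) ⊓ (v + a))) (1 : ℝ → ℝ)) from rfl]
  rw [MeasureTheory.integral_indicator_one measurableSet_Ico]
  rw [Real.volume_real_Ico]
  congr 1
  rcases le_total u v with h | h
  · rw [abs_of_nonpos (by linarith)]
    rw [sup_eq_right.mpr h, inf_eq_left.mpr (by linarith)]
    ring
  · rw [abs_of_nonneg (by linarith)]
    rw [sup_eq_left.mpr h, inf_eq_right.mpr (by linarith)]
    ring

lemma tent_psd (n : ℕ) (t : Fin n → ℝ) (a : ℝ) (x : Fin n → ℝ) :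
    0 ≤ ∑ i, ∑ j, x i * x j * max (a - |t i - t j|) 0 := by
  set ind : Fin n → ℝ → ℝ := fun i w => Set.indicator (Set.Ico (t i) (t i + a)) (fun _ => (1:ℝ)) w with hind
  have hint : ∀ i j : Fin n, Integrable (fun w => ind i w * ind j w) volume := by
    intro i j
    have : (fun w => ind i w * ind j w)
        = Set.indicator (Set.Ico (t i) (t i+a) ∩ Set.Ico (t j) (t j+a)) (fun _ => (1:ℝ)) := by
      funext w
      rw [hind]
      rw [← Set.inter_indicator_mul]; simp
    rw [this, Set.Ico_inter_Ico]
    rw [integrable_indicator_iff measurableSet_Ico]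
    exact integrableOn_const measure_Ico_lt_top.ne
  have key : ∑ i, ∑ j, x i * x j * max (a - |t i - t j|) 0
      = ∫ w, (∑ i, x i * ind i w)^2 := by
    have expand : ∀ w, (∑ i, x i * ind i w)^2 = ∑ i, ∑ j, x i * x j * (ind i w * ind j w) := by
      intro w
      rw [sq, Finset.sum_mul_sum]
      apply Finset.sum_congr rfl; intro i _
      apply Finset.sum_congr rfl; intro j _
      ring
    simp_rw [expand]
    rw [MeasureTheory.integral_finset_sum]
    · apply Finset.sum_congr rfl; intro i _
      rw [MeasureTheory.integral_finset_sum]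
      · apply Finset.sum_congr rfl; intro j _
        rw [MeasureTheory.integral_const_mul, tent_overlap]
      · intro j _
        exact (hint i j).const_mul _
    · intro i _
      apply MeasureTheory.integrable_finset_sum
      intro j _
      exact (hint i j).const_mul _
  rw [key]
  exact integral_nonneg fun w => sq_nonneg _

end Tent

lemma G_strictAnti (G : ℝ → ℝ)
    (hGmono : ∀ s s' : ℝ, 0 ≤ s → s ≤ s' → G s' ≤ G s)
    (hGconv : StrictConvexOn ℝ (Set.Ici (0 : ℝ)) G)
    {u v : ℝ} (hu : 0 ≤ u) (huv : u < v) : G v < G u := by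
  by_contra h
  push_neg at h
  have hle : G v ≤ G u := hGmono u v hu huv.le
  have heq : G v = G u := le_antisymm hle h
  have hv : (0:ℝ) ≤ v := le_trans hu huv.le
  have := hGconv.slope_strict_mono_adjacent (Set.mem_Ici.mpr hu)
    (Set.mem_Ici.mpr (by linarith : (0:ℝ) ≤ v + 1)) huv (by linarith : v < v + 1)
  rw [heq] at this
  simp only [sub_self, zero_div] at this
  have h2 : G (v+1) ≤ G v := hGmono v (v+1) hv (by linarith)
  have hpos : (0:ℝ) < (G (v+1) - G u) / (v + 1 - v) := this
  rw [show v + 1 - v = (1:ℝ) by ring, div_one] at hpos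
  linarith

lemma kernel_posdef (n : ℕ) (t : Fin n → ℝ) (htinj : Function.Injective t)
    (G : ℝ → ℝ)
    (hGpos : ∀ s : ℝ, 0 ≤ s → 0 < G s)
    (hGmono : ∀ s s' : ℝ, 0 ≤ s → s ≤ s' → G s' ≤ G s)
    (hGconv : StrictConvexOn ℝ (Set.Ici (0 : ℝ)) G)
    (x : Fin n → ℝ) (hx : x ≠ 0) :
    0 < ∑ i, ∑ j, x i * x j * G |t i - t j| := by
  obtain ⟨i₀, hi₀⟩ : ∃ i, x i ≠ 0 := by
    by_contra h
    push_neg at h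
    exact hx (funext h)
  -- the set of pairwise distances
  set F : Finset ℝ := Finset.image (fun p : Fin n × Fin n => |t p.1 - t p.2|) Finset.univ with hF
  have hdist : ∀ i j : Fin n, |t i - t j| ∈ F := by
    intro i j
    exact Finset.mem_image.mpr ⟨(i,j), Finset.mem_univ _, rfl⟩
  have hF0 : (0:ℝ) ∈ F := by simpa using hdist i₀ i₀
  have hFnonneg : ∀ d ∈ F, (0:ℝ) ≤ d := by
    intro d hd
    obtain ⟨p, -, rfl⟩ := Finset.mem_image.mp hd
    exact abs_nonneg _
  have hFne : F.Nonempty := ⟨0, hF0⟩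
  set m : ℕ := F.card - 1 with hm
  have hcard : F.card = m + 1 := by
    have := Finset.card_pos.mpr hFne
    omega
  set e : Fin (m+1) ↪o ℝ := F.orderEmbOfFin hcard with he
  set ee : ℕ → ℝ := fun k => e ⟨min k m, by omega⟩ with hee
  have hee_eq : ∀ k (h : k ≤ m), ee k = e ⟨k, by omega⟩ := by
    intro k h
    simp only [hee]
    congr 1
    exact Fin.ext (by simp [Nat.min_eq_left h])
  have hee_mem : ∀ k, ee k ∈ F := fun k => Finset.orderEmbOfFin_mem _ _ _
  have hee_mono : ∀ k l, k < l → l ≤ m → ee k < ee l := by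
    intro k l hkl hl
    rw [hee_eq k (by omega), hee_eq l hl]
    exact e.strictMono (by simp [Fin.lt_def]; omega)
  have hee0 : ee 0 = 0 := by
    rw [hee_eq 0 (by omega)]
    have h1 : e ⟨0, by omega⟩ ≤ 0 := by
      have := Finset.orderEmbOfFin_zero hcard (by omega)
      rw [he, this]
      exact Finset.min'_le _ _ hF0
    have h2 : (0:ℝ) ≤ e ⟨0, by omega⟩ := hFnonneg _ (Finset.orderEmbOfFin_mem _ _ _)
    linarith
  have hee_nonneg : ∀ k, 0 ≤ ee k := fun k => hFnonneg _ (hee_mem k)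
  have hsurj : ∀ d ∈ F, ∃ k, k ≤ m ∧ ee k = d := by
    intro d hd
    have : d ∈ Set.range (F.orderEmbOfFin hcard) := by
      rw [Finset.range_orderEmbOfFin]
      exact hd
    obtain ⟨k, hk⟩ := this
    exact ⟨k.1, by omega, by rw [hee_eq k.1 (by omega)]; simpa using hk⟩
  -- slopes
  set w : ℕ → ℝ := fun k => (G (ee k) - G (ee (k+1))) / (ee (k+1) - ee k) with hw
  have hwpos : ∀ k, k < m → 0 < w k := by
    intro k hk
    apply div_pos
    · have := G_strictAnti G hGmono hGconv (hee_nonneg k) (hee_mono k (k+1) (by omega) (by omega))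
      linarith
    · have := hee_mono k (k+1) (by omega) (by omega)
      linarith
  have hwanti : ∀ k, k + 1 < m → w (k+1) < w k := by
    intro k hk
    have h01 := hee_mono k (k+1) (by omega) (by omega)
    have h12 := hee_mono (k+1) (k+2) (by omega) (by omega)
    have := hGconv.slope_strict_mono_adjacent (Set.mem_Ici.mpr (hee_nonneg k))
      (Set.mem_Ici.mpr (hee_nonneg (k+2))) h01 h12
    have e1 : w k = -((G (ee (k+1)) - G (ee k)) / (ee (k+1) - ee k)) := by
      rw [hw]; ring_nf
    have e2 : w (k+1) = -((G (ee (k+2)) - G (ee (k+1))) / (ee (k+2) - ee (k+1))) := by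
      rw [hw]; ring_nf
    rw [e1, e2]
    exact neg_lt_neg this
  -- the key pointwise identity
  have hee_le : ∀ k l, k ≤ l → l ≤ m → ee k ≤ ee l := by
    intro k l hkl hl
    rcases Nat.eq_or_lt_of_le hkl with h | h
    · rw [h]
    · exact (hee_mono k l h hl).le
  have hident : ∀ d ∈ F, G d = G (ee m) +
      ∑ k ∈ Finset.range m, w k * (max (ee (k+1) - d) 0 - max (ee k - d) 0) := by
    intro d hd
    obtain ⟨j, hj, hjd⟩ := hsurj d hd
    subst hjd
    have hterm : ∀ k ∈ Finset.range m,
        w k * (max (ee (k+1) - ee j) 0 - max (ee k - ee j) 0)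
        = if j ≤ k then G (ee k) - G (ee (k+1)) else 0 := by
      intro k hk
      rw [Finset.mem_range] at hk
      by_cases hjk : j ≤ k
      · rw [if_pos hjk]
        have h1 : ee j ≤ ee k := hee_le j k hjk (by omega)
        have h2 : ee j ≤ ee (k+1) := hee_le j (k+1) (by omega) (by omega)
        have h3 : ee k < ee (k+1) := hee_mono k (k+1) (by omega) (by omega)
        rw [max_eq_left (by linarith), max_eq_left (by linarith), hw]
        rw [show (ee (k+1) - ee j) - (ee k - ee j) = ee (k+1) - ee k by ring]
        exact div_mul_cancel₀ _ (by linarith)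
      · rw [if_neg hjk]
        have h1 : ee (k+1) ≤ ee j := hee_le (k+1) j (by omega) hj
        have h2 : ee k ≤ ee j := hee_le k j (by omega) hj
        rw [max_eq_right (by linarith), max_eq_right (by linarith)]
        ring
    rw [Finset.sum_congr rfl hterm]
    rw [Finset.range_eq_Ico, ← Finset.sum_Ico_consecutive _ (Nat.zero_le j) hj]
    have hz : ∀ k ∈ Finset.Ico 0 j, (if j ≤ k then G (ee k) - G (ee (k+1)) else 0) = 0 := by
      intro k hk
      rw [Finset.mem_Ico] at hk
      rw [if_neg (by omega)]
    rw [Finset.sum_congr rfl hz, Finset.sum_const_zero, zero_add]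
    have ht : ∀ k ∈ Finset.Ico j m, (if j ≤ k then G (ee k) - G (ee (k+1)) else 0)
        = G (ee k) - G (ee (k+1)) := by
      intro k hk
      rw [Finset.mem_Ico] at hk
      rw [if_pos hk.1]
    rw [Finset.sum_congr rfl ht, Finset.sum_Ico_eq_sum_range]
    have h5 := Finset.sum_range_sub' (fun i => G (ee (j + i))) (m - j)
    simp only [Nat.add_assoc]
    rw [h5, Nat.add_zero, Nat.add_sub_cancel' hj]
    ring
  -- tent quadratic forms
  set T : ℝ → ℝ := fun a => ∑ i, ∑ j, x i * x j * max (a - |t i - t j|) 0 with hT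
  have hTnonneg : ∀ a, 0 ≤ T a := fun a => tent_psd n t a x
  have hT0 : T 0 = 0 := by
    rw [hT]
    apply Finset.sum_eq_zero; intro i _
    apply Finset.sum_eq_zero; intro j _
    rw [max_eq_right (by simp [abs_nonneg] : (0:ℝ) - |t i - t j| ≤ 0), mul_zero]
  -- main expansion
  have hQ : (∑ i, ∑ j, x i * x j * G |t i - t j|)
      = G (ee m) * (∑ i, x i)^2
        + ∑ k ∈ Finset.range m, w k * (T (ee (k+1)) - T (ee k)) := by
    have step1 : (∑ i, ∑ j, x i * x j * G |t i - t j|)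
        = ∑ i, ∑ j, (x i * x j * G (ee m)
          + ∑ k ∈ Finset.range m, (w k * (x i * x j * max (ee (k+1) - |t i - t j|) 0)
              - w k * (x i * x j * max (ee k - |t i - t j|) 0))) := by
      apply Finset.sum_congr rfl; intro i _
      apply Finset.sum_congr rfl; intro j _
      rw [hident _ (hdist i j), mul_add, Finset.mul_sum]
      congr 1
      apply Finset.sum_congr rfl; intro k _
      ring
    rw [step1]
    simp only [Finset.sum_add_distrib]
    congr 1
    · have h := Finset.sum_mul_sum (Finset.univ : Finset (Fin n)) (Finset.univ : Finset (Fin n)) x x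
      rw [sq, h, Finset.mul_sum]
      apply Finset.sum_congr rfl; intro i _
      rw [Finset.mul_sum]
      apply Finset.sum_congr rfl; intro j _
      ring
    · have hswap : (∑ i, ∑ j, ∑ k ∈ Finset.range m,
          (w k * (x i * x j * max (ee (k+1) - |t i - t j|) 0)
            - w k * (x i * x j * max (ee k - |t i - t j|) 0)))
          = ∑ k ∈ Finset.range m, ∑ i, ∑ j,
          (w k * (x i * x j * max (ee (k+1) - |t i - t j|) 0)
            - w k * (x i * x j * max (ee k - |t i - t j|) 0)) := by
        rw [show (∑ i, ∑ j, ∑ k ∈ Finset.range m,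
          (w k * (x i * x j * max (ee (k+1) - |t i - t j|) 0)
            - w k * (x i * x j * max (ee k - |t i - t j|) 0)))
          = ∑ i, ∑ k ∈ Finset.range m, ∑ j,
          (w k * (x i * x j * max (ee (k+1) - |t i - t j|) 0)
            - w k * (x i * x j * max (ee k - |t i - t j|) 0)) from
          Finset.sum_congr rfl (fun i _ => Finset.sum_comm)]
        exact Finset.sum_comm
      rw [hswap]
      apply Finset.sum_congr rfl; intro k _
      simp only [hT, mul_sub, Finset.mul_sum]
      rw [← Finset.sum_sub_distrib]
      refine Finset.sum_congr rfl fun i _ => ?_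
      rw [← Finset.sum_sub_distrib]
  -- Abel summation
  have hps : ∀ r, ∑ i ∈ Finset.range r, (T (ee (i+1)) - T (ee i)) = T (ee r) := by
    intro r
    rw [Finset.sum_range_sub (fun i => T (ee i)), hee0, hT0, sub_zero]
  have habel := Finset.sum_range_by_parts w (fun k => T (ee (k+1)) - T (ee k)) m
  simp only [smul_eq_mul, hps] at habel
  rw [hQ, habel]
  have hflip : ∑ k ∈ Finset.range (m-1), (w (k+1) - w k) * T (ee (k+1))
      = -∑ k ∈ Finset.range (m-1), (w k - w (k+1)) * T (ee (k+1)) := by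
    rw [← Finset.sum_neg_distrib]
    apply Finset.sum_congr rfl; intro k _
    ring
  rw [hflip, sub_neg_eq_add]
  rcases Nat.eq_zero_or_pos m with hm0 | hmpos
  · -- m = 0 : all points coincide, n = 1 essentially
    have hcard1 : F.card = 1 := by omega
    have hF1 : F = {(0:ℝ)} := by
      rw [Finset.card_eq_one] at hcard1
      obtain ⟨a, ha⟩ := hcard1
      rw [ha] at hF0 ⊢
      rw [Finset.mem_singleton] at hF0
      rw [hF0]
    have hall : ∀ i j : Fin n, i = j := by
      intro i j
      have := hdist i j
      rw [hF1, Finset.mem_singleton, abs_eq_zero, sub_eq_zero] at this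
      exact htinj this
    have hsum : (∑ i, x i) = x i₀ := by
      apply Finset.sum_eq_single i₀
      · intro b _ hb
        exact absurd (hall b i₀) hb
      · intro h
        exact absurd (Finset.mem_univ i₀) h
    have hT00 : T (ee 0) = 0 := by rw [hee0, hT0]
    simp only [hm0, Finset.range_zero, Finset.sum_empty, Nat.zero_sub, add_zero]
    rw [hT00, mul_zero, hsum, add_zero]
    have : 0 < G (ee 0) := hGpos _ (hee_nonneg 0)
    have h2 : 0 < (x i₀)^2 := by rw [sq]; exact mul_self_pos.mpr hi₀
    nlinarith
  · -- m ≥ 1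
    have he1pos : 0 < ee 1 := by
      rw [← hee0]
      exact hee_mono 0 1 (by omega) hmpos
    have hT1 : T (ee 1) = (∑ i, x i * x i) * ee 1 := by
      rw [hT, Finset.sum_mul]
      apply Finset.sum_congr rfl; intro i _
      rw [Finset.sum_eq_single i]
      · rw [sub_self, abs_zero, sub_zero, max_eq_left he1pos.le]
      · intro j _ hji
        have hne : |t i - t j| ≠ 0 := by
          rw [abs_ne_zero, sub_ne_zero]
          exact fun h => hji (htinj h).symm
        obtain ⟨k, hk, hkd⟩ := hsurj _ (hdist i j)
        have hk1 : 1 ≤ k := by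
          by_contra h
          push_neg at h
          interval_cases k
          rw [hee0] at hkd
          exact hne hkd.symm
        have : ee 1 ≤ |t i - t j| := by
          rw [← hkd]
          exact hee_le 1 k hk1 hk
        rw [max_eq_right (by linarith), mul_zero]
      · intro h
        exact absurd (Finset.mem_univ i) h
    have hT1pos : 0 < T (ee 1) := by
      rw [hT1]
      apply mul_pos _ he1pos
      apply Finset.sum_pos' (fun i _ => mul_self_nonneg (x i))
      exact ⟨i₀, Finset.mem_univ _, mul_self_pos.mpr hi₀⟩
    have hA : 0 ≤ G (ee m) * (∑ i, x i)^2 :=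
      mul_nonneg (hGpos _ (hee_nonneg m)).le (sq_nonneg _)
    have hB : 0 ≤ w (m-1) * T (ee m) :=
      mul_nonneg (hwpos (m-1) (by omega)).le (hTnonneg _)
    rcases Nat.lt_or_ge m 2 with hm1 | hm2
    · -- m = 1
      have hm1' : m = 1 := by omega
      have hw0 : 0 < w 0 := hwpos 0 (by omega)
      have hB' : 0 < w (m-1) * T (ee m) := by
        rw [show m - 1 = 0 from by omega, show m = 1 from hm1']
        exact mul_pos hw0 hT1pos
      have hS0 : ∑ k ∈ Finset.range (m-1), (w k - w (k+1)) * T (ee (k+1)) = 0 := by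
        rw [show m - 1 = 0 from by omega, Finset.range_zero, Finset.sum_empty]
      rw [hS0, add_zero]
      linarith
    · -- m ≥ 2
      have hS : 0 < ∑ k ∈ Finset.range (m-1), (w k - w (k+1)) * T (ee (k+1)) := by
        apply Finset.sum_pos'
        · intro k hk
          rw [Finset.mem_range] at hk
          have := hwanti k (by omega)
          exact mul_nonneg (by linarith) (hTnonneg _)
        · refine ⟨0, Finset.mem_range.mpr (by omega), ?_⟩
          have := hwanti 0 (by omega)
          exact mul_pos (by linarith) hT1pos
      linarith


open Matrix

section Helpers
variable {n : ℕ}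

-- abbreviation for quadratic pairing
lemma pairing_swap (M : Matrix (Fin n) (Fin n) ℝ) (hsym : ∀ i j, M i j = M j i)
    (u v : Fin n → ℝ) :
    (∑ i, ∑ j, u i * v j * M i j) = ∑ i, ∑ j, v i * u j * M i j := by
  rw [Finset.sum_comm]
  apply Finset.sum_congr rfl; intro i _
  apply Finset.sum_congr rfl; intro j _
  rw [hsym j i]
  ring

lemma dot_mulVec_eq {n : ℕ} (M : Matrix (Fin n) (Fin n) ℝ) (u v : Fin n → ℝ) :
    u ⬝ᵥ (M *ᵥ v) = ∑ i, ∑ j, u i * v j * M i j := by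
  have h : u ⬝ᵥ (M *ᵥ v) = ∑ i, u i * ∑ j, M i j * v j := rfl
  rw [h]
  apply Finset.sum_congr rfl; intro i _
  rw [Finset.mul_sum]
  apply Finset.sum_congr rfl; intro j _
  ring

end Helpers

/-- **All trades of the optimal strategy have the same sign (Remark 1).**
If `G` is positive, nonincreasing and strictly convex on `[0,∞)` and `X₀ > 0`,
then every component of `M⁻¹𝟙` is strictly positive, and consequently every
component of the optimal strategy `ξ* := −(X₀/(𝟙ᵀM⁻¹𝟙))·M⁻¹𝟙` is strictly
negative: the optimal liquidation strategy consists exclusively of sell trades. -/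
theorem optimal_strategy_all_sells
    (N : ℕ) (t : Fin (N + 1) → ℝ) (ht : StrictMono t)
    (G : ℝ → ℝ)
    (hGpos : ∀ s : ℝ, 0 ≤ s → 0 < G s)
    (hGmono : ∀ s s' : ℝ, 0 ≤ s → s ≤ s' → G s' ≤ G s)
    (hGconv : StrictConvexOn ℝ (Set.Ici (0 : ℝ)) G)
    (M : Matrix (Fin (N + 1)) (Fin (N + 1)) ℝ)
    (hM : M = Matrix.of fun i j => G |t i - t j|)
    (one : Fin (N + 1) → ℝ) (hone : one = fun _ => 1)
    (X₀ : ℝ) (hX₀ : 0 < X₀)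
    (ξstar : Fin (N + 1) → ℝ)
    (hξstar : ξstar = fun i => -(X₀ / (one ⬝ᵥ (M⁻¹ *ᵥ one))) * (M⁻¹ *ᵥ one) i) :
    (∀ i, 0 < (M⁻¹ *ᵥ one) i) ∧ (∀ i, ξstar i < 0) := by
  have htinj : Function.Injective t := ht.injective
  have hMapp : ∀ i j, M i j = G |t i - t j| := by
    intro i j; rw [hM]; rfl
  have hMsym : ∀ i j, M i j = M j i := by
    intro i j; rw [hMapp, hMapp, abs_sub_comm]
  -- positive definiteness
  have hPD : ∀ x : Fin (N+1) → ℝ, x ≠ 0 → 0 < ∑ i, ∑ j, x i * x j * M i j := by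
    intro x hx
    have := kernel_posdef (N+1) t htinj G hGpos hGmono hGconv x hx
    convert this using 2 with i
    apply Finset.sum_congr rfl; intro j _
    rw [hMapp]
  -- invertibility
  have hdet : IsUnit M.det := by
    by_contra h
    have h0 : M.det = 0 := by
      rcases eq_or_ne M.det 0 with h' | h'
      · exact h'
      · exact absurd (IsUnit.mk0 _ h') h
    obtain ⟨v, hv0, hv⟩ := (Matrix.exists_mulVec_eq_zero_iff).mpr h0
    have : (0:ℝ) < ∑ i, ∑ j, v i * v j * M i j := hPD v hv0
    have hz : ∑ i, ∑ j, v i * v j * M i j = 0 := by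
      have hdot : v ⬝ᵥ (M *ᵥ v) = 0 := by rw [hv]; simp
      rw [← hdot, dot_mulVec_eq]
    rw [hz] at this
    exact lt_irrefl 0 this
  -- minimize the quadratic form on the standard simplex
  set Q : (Fin (N+1) → ℝ) → ℝ := fun y => ∑ i, ∑ j, y i * y j * M i j with hQdef
  have hQcont : Continuous Q := by
    apply continuous_finset_sum; intro i _
    apply continuous_finset_sum; intro j _
    exact ((continuous_apply i).mul (continuous_apply j)).mul continuous_const
  have hScompact : IsCompact (stdSimplex ℝ (Fin (N+1))) := isCompact_stdSimplex _ _
  have hSne : (stdSimplex ℝ (Fin (N+1))).Nonempty := by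
    refine ⟨fun _ => (N+1 : ℝ)⁻¹, fun i => by positivity, ?_⟩
    rw [Finset.sum_const, Finset.card_univ, Fintype.card_fin, nsmul_eq_mul]
    have : ((N:ℝ)+1) ≠ 0 := by positivity
    push_cast
    field_simp
  obtain ⟨z, hzS, hzmin⟩ := hScompact.exists_isMinOn hSne hQcont.continuousOn
  have hznn : ∀ i, 0 ≤ z i := hzS.1
  have hzsum : ∑ i, z i = 1 := hzS.2
  set P : Fin (N+1) → ℝ := fun i => ∑ j, z j * M i j with hPdef
  -- KKT conditions
  have hKKT : ∀ i j : Fin (N+1), 0 < z j → P j ≤ P i := by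
    intro i j hzj
    rcases eq_or_ne i j with rfl | hij
    · exact le_refl _
    set d : Fin (N+1) → ℝ := fun l => (if l = i then (1:ℝ) else 0) - (if l = j then 1 else 0)
      with hd
    have hRdz : ∑ l, ∑ r, d l * z r * M l r = P i - P j := by
      have h1 : ∀ l, ∑ r, d l * z r * M l r = d l * P l := by
        intro l; rw [hPdef, Finset.mul_sum]
        apply Finset.sum_congr rfl; intro r _; ring
      rw [Finset.sum_congr rfl (fun l _ => h1 l), hd]
      simp only [sub_mul, one_mul, zero_mul, ite_mul, Finset.sum_sub_distrib]
      rw [Finset.sum_ite_eq' Finset.univ i P, Finset.sum_ite_eq' Finset.univ j P]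
      simp
    have hRzd : ∑ l, ∑ r, z l * d r * M l r = P i - P j := by
      rw [pairing_swap M hMsym z d]
      exact hRdz
    have hRdd : ∑ l, ∑ r, d l * d r * M l r = M i i - 2 * M i j + M j j := by
      have h1 : ∀ l, ∑ r, d l * d r * M l r = d l * (M l i - M l j) := by
        intro l
        have : ∀ r, d l * d r * M l r = d l * (d r * M l r) := fun r => by ring
        rw [Finset.sum_congr rfl (fun r _ => this r), ← Finset.mul_sum]
        congr 1
        rw [hd]
        simp only [sub_mul, one_mul, zero_mul, ite_mul, Finset.sum_sub_distrib]
        rw [Finset.sum_ite_eq' Finset.univ i (fun r => M l r),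
          Finset.sum_ite_eq' Finset.univ j (fun r => M l r)]
        simp
      rw [Finset.sum_congr rfl (fun l _ => h1 l), hd]
      simp only [sub_mul, one_mul, zero_mul, ite_mul, Finset.sum_sub_distrib]
      rw [Finset.sum_ite_eq' Finset.univ i (fun l => M l i - M l j),
        Finset.sum_ite_eq' Finset.univ j (fun l => M l i - M l j)]
      simp only [Finset.mem_univ, if_true]
      rw [hMsym j i]
      ring
    set A : ℝ := 2 * (P i - P j) with hA
    set B : ℝ := M i i - 2 * M i j + M j j with hB
    have key : ∀ ε : ℝ, 0 < ε → ε ≤ z j → 0 ≤ ε * A + ε^2 * B := by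
      intro ε hε hεz
      set y : Fin (N+1) → ℝ := fun l => z l + ε * d l with hy
      have hyS : y ∈ stdSimplex ℝ (Fin (N+1)) := by
        constructor
        · intro l
          rw [hy]
          simp only [hd]
          rcases eq_or_ne l i with rfl | hli
          · rw [if_pos rfl, if_neg hij]
            have := hznn l
            linarith
          · rw [if_neg hli]
            rcases eq_or_ne l j with rfl | hlj
            · rw [if_pos rfl]
              linarith
            · rw [if_neg hlj]
              have := hznn l
              linarith
        · rw [hy]
          rw [Finset.sum_add_distrib, hzsum, ← Finset.mul_sum]
          have hdsum : ∑ l, d l = 0 := by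
            rw [hd]
            simp only [Finset.sum_sub_distrib]
            rw [Finset.sum_ite_eq' Finset.univ i (fun _ => (1:ℝ)),
              Finset.sum_ite_eq' Finset.univ j (fun _ => (1:ℝ))]
            simp
          rw [hdsum, mul_zero, add_zero]
      have hexp : Q y = Q z + ε * A + ε^2 * B := by
        have hterm : ∀ l r : Fin (N+1), y l * y r * M l r
            = z l * z r * M l r + ε * (d l * z r * M l r) + ε * (z l * d r * M l r)
              + ε^2 * (d l * d r * M l r) := by
          intro l r
          rw [hy]
          simp only
          ring
        have : Q y = ∑ l, ∑ r, (z l * z r * M l r + ε * (d l * z r * M l r)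
            + ε * (z l * d r * M l r) + ε^2 * (d l * d r * M l r)) := by
          rw [hQdef]
          simp only
          exact Finset.sum_congr rfl fun l _ => Finset.sum_congr rfl fun r _ => hterm l r
        rw [this]
        simp only [Finset.sum_add_distrib, ← Finset.mul_sum]
        rw [hRdz, hRzd, hRdd, hQdef, hA, hB]
        simp only
        ring
      have hle : Q z ≤ Q y := hzmin hyS
      rw [hexp] at hle
      linarith
    by_contra hcon
    push_neg at hcon
    have hAneg : A < 0 := by rw [hA]; linarith
    set ε : ℝ := min (z j) ((-A) / (|B| + 1)) with hε
    have habs : (0:ℝ) < |B| + 1 := by positivity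
    have hεpos : 0 < ε := lt_min hzj (div_pos (by linarith) habs)
    have h1 := key ε hεpos (min_le_left _ _)
    have h2 : ε ≤ (-A) / (|B| + 1) := min_le_right _ _
    have h4 : ε * (|B| + 1) ≤ -A := (le_div_iff₀ habs).mp h2
    have hBle : B ≤ |B| := le_abs_self B
    nlinarith [mul_le_mul_of_nonneg_left h4 hεpos.le,
      mul_le_mul_of_nonneg_left hBle (mul_nonneg hεpos.le hεpos.le),
      mul_pos hεpos hεpos]
  -- the support
  obtain ⟨j₀, hzj₀⟩ : ∃ j, 0 < z j := by
    by_contra h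
    push_neg at h
    have hz0 : ∀ i, z i = 0 := fun i => le_antisymm (h i) (hznn i)
    rw [Finset.sum_congr rfl (fun i _ => hz0 i), Finset.sum_const_zero] at hzsum
    norm_num at hzsum
  set lam : ℝ := P j₀ with hlam
  have hPsupp : ∀ j, 0 < z j → P j = lam := fun j hj =>
    le_antisymm (hKKT j₀ j hj) (hKKT j j₀ hzj₀)
  have hPge : ∀ i, lam ≤ P i := fun i => hKKT i j₀ hzj₀
  -- all components of the minimizer are positive
  have hzpos : ∀ k, 0 < z k := by
    intro k
    rcases (hznn k).lt_or_eq with h | h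
    · exact h
    exfalso
    have hzk : z k = 0 := h.symm
    set SS := Finset.univ.filter (fun j => 0 < z j) with hSS
    have hmemSS : ∀ j, j ∈ SS ↔ 0 < z j := by
      intro j
      rw [hSS, Finset.mem_filter]
      simp
    have hj₀S : j₀ ∈ SS := (hmemSS j₀).mpr hzj₀
    have hSne' : SS.Nonempty := ⟨j₀, hj₀S⟩
    have hkS : k ∉ SS := fun hc => by
      rw [hmemSS] at hc
      linarith
    have htne : ∀ j ∈ SS, t j ≠ t k := fun j hj hc => hkS ((htinj hc) ▸ hj)
    suffices hPk : P k < lam by exact absurd (hPge k) (not_le.mpr hPk)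
    -- comparison helper
    have hcomp : ∀ q ∈ SS, (∀ j ∈ SS, |t q - t j| ≤ |t k - t j|) →
        (0 < |t k - t q|) → P k < lam := by
      intro q hqS hle hq
      have hzq : 0 < z q := (hmemSS q).mp hqS
      have hlt : P k < P q := by
        rw [hPdef]
        simp only
        apply Finset.sum_lt_sum
        · intro j _
          rcases (hznn j).lt_or_eq with hzjpos | hzj0
          · have hjS : j ∈ SS := (hmemSS j).mpr hzjpos
            have hmono' : G |t k - t j| ≤ G |t q - t j| :=
              hGmono _ _ (abs_nonneg _) (hle j hjS)
            rw [hMapp, hMapp]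
            exact mul_le_mul_of_nonneg_left hmono' (hznn j)
          · rw [← hzj0]
            simp
        · refine ⟨q, Finset.mem_univ q, ?_⟩
          rw [hMapp, hMapp, sub_self, abs_zero]
          exact (mul_lt_mul_iff_right₀ hzq).mpr (G_strictAnti G hGmono hGconv le_rfl hq)
      calc P k < P q := hlt
        _ = lam := hPsupp q hzq
    -- split support into left and right of k
    set SL := SS.filter (fun j => t j < t k) with hSL
    set SR := SS.filter (fun j => t k < t j) with hSR
    have hsplit : ∀ j ∈ SS, j ∈ SL ∨ j ∈ SR := by
      intro j hj
      rcases lt_or_gt_of_ne (htne j hj) with hlt | hgt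
      · exact Or.inl (Finset.mem_filter.mpr ⟨hj, hlt⟩)
      · exact Or.inr (Finset.mem_filter.mpr ⟨hj, hgt⟩)
    rcases Finset.eq_empty_or_nonempty SL with hSLe | hSLne
    · -- all support to the right of k
      obtain ⟨q, hqS, hqmin⟩ := SS.exists_min_image t hSne'
      have hright : ∀ j ∈ SS, t k < t j := by
        intro j hj
        rcases hsplit j hj with hjL | hjR
        · rw [hSLe] at hjL
          exact absurd hjL (Finset.notMem_empty j)
        · exact (Finset.mem_filter.mp hjR).2
      have hkq : t k < t q := hright q hqS
      apply hcomp q hqS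
      · intro j hj
        have h2 : t q ≤ t j := hqmin j hj
        have h3 : t k < t j := hright j hj
        rw [abs_of_nonpos (by linarith : t q - t j ≤ 0),
          abs_of_nonpos (by linarith : t k - t j ≤ 0)]
        linarith
      · rw [abs_of_nonpos (by linarith : t k - t q ≤ 0)]
        linarith
    rcases Finset.eq_empty_or_nonempty SR with hSRe | hSRne
    · -- all support to the left of k
      obtain ⟨q, hqS, hqmax⟩ := SS.exists_max_image t hSne'
      have hleft : ∀ j ∈ SS, t j < t k := by
        intro j hj
        rcases hsplit j hj with hjL | hjR
        · exact (Finset.mem_filter.mp hjL).2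
        · rw [hSRe] at hjR
          exact absurd hjR (Finset.notMem_empty j)
      have hkq : t q < t k := hleft q hqS
      apply hcomp q hqS
      · intro j hj
        have h2 : t j ≤ t q := hqmax j hj
        rw [abs_of_nonneg (by linarith : 0 ≤ t q - t j),
          abs_of_nonneg (by linarith : 0 ≤ t k - t j)]
        linarith
      · rw [abs_of_nonneg (by linarith : 0 ≤ t k - t q)]
        linarith
    · -- support on both sides: strict convexity
      obtain ⟨p, hpSL, hpmax⟩ := SL.exists_max_image t hSLne
      obtain ⟨q, hqSR, hqmin⟩ := SR.exists_min_image t hSRne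
      have hpS : p ∈ SS := (Finset.mem_filter.mp hpSL).1
      have hqS : q ∈ SS := (Finset.mem_filter.mp hqSR).1
      have htp : t p < t k := (Finset.mem_filter.mp hpSL).2
      have htq : t k < t q := (Finset.mem_filter.mp hqSR).2
      have hzp : 0 < z p := (hmemSS p).mp hpS
      have hzq : 0 < z q := (hmemSS q).mp hqS
      have hpq : t p < t q := lt_trans htp htq
      set θ : ℝ := (t q - t k) / (t q - t p) with hθdef
      have hθpos : 0 < θ := div_pos (by linarith) (by linarith)
      have hθlt : θ < 1 := by
        rw [hθdef, div_lt_one (by linarith : (0:ℝ) < t q - t p)]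
        linarith
      have hcomb : θ * t p + (1 - θ) * t q = t k := by
        have h0 : t q - t p ≠ 0 := by linarith
        rw [hθdef]
        field_simp
        ring
      have hkey : ∀ j ∈ SS, G |t k - t j| < θ * G |t p - t j| + (1-θ) * G |t q - t j| := by
        intro j hj
        rcases hsplit j hj with hjL | hjR
        · have hjp : t j ≤ t p := hpmax j hjL
          have hjk : t j < t k := (Finset.mem_filter.mp hjL).2
          rw [abs_of_nonneg (by linarith : 0 ≤ t p - t j),
            abs_of_nonneg (by linarith : 0 ≤ t q - t j),
            abs_of_nonneg (by linarith : 0 ≤ t k - t j)]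
          have hne : t p - t j ≠ t q - t j := fun hcon => by
            have : t p = t q := by linarith
            linarith
          have hsc := hGconv.2 (Set.mem_Ici.mpr (by linarith : (0:ℝ) ≤ t p - t j))
            (Set.mem_Ici.mpr (by linarith : (0:ℝ) ≤ t q - t j)) hne hθpos
            (by linarith : 0 < 1 - θ) (by ring)
          rw [smul_eq_mul, smul_eq_mul, smul_eq_mul, smul_eq_mul] at hsc
          rw [show θ * (t p - t j) + (1-θ) * (t q - t j) = t k - t j from by
            linear_combination hcomb] at hsc
          exact hsc
        · have hjq : t q ≤ t j := hqmin j hjR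
          have hjk : t k < t j := (Finset.mem_filter.mp hjR).2
          rw [abs_of_nonpos (by linarith : t p - t j ≤ 0),
            abs_of_nonpos (by linarith : t q - t j ≤ 0),
            abs_of_nonpos (by linarith : t k - t j ≤ 0), neg_sub, neg_sub, neg_sub]
          have hne : t j - t p ≠ t j - t q := fun hcon => by
            have : t p = t q := by linarith
            linarith
          have hsc := hGconv.2 (Set.mem_Ici.mpr (by linarith : (0:ℝ) ≤ t j - t p))
            (Set.mem_Ici.mpr (by linarith : (0:ℝ) ≤ t j - t q)) hne hθpos
            (by linarith : 0 < 1 - θ) (by ring)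
          rw [smul_eq_mul, smul_eq_mul, smul_eq_mul, smul_eq_mul] at hsc
          rw [show θ * (t j - t p) + (1-θ) * (t j - t q) = t j - t k from by
            linear_combination -hcomb] at hsc
          exact hsc
      have hsum : P k < θ * P p + (1-θ) * P q := by
        rw [hPdef]
        simp only
        rw [Finset.mul_sum, Finset.mul_sum, ← Finset.sum_add_distrib]
        apply Finset.sum_lt_sum
        · intro j _
          rcases (hznn j).lt_or_eq with hzjpos | hzj0
          · have hjS : j ∈ SS := (hmemSS j).mpr hzjpos
            have := hkey j hjS
            rw [hMapp, hMapp, hMapp]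
            nlinarith [hzjpos, this]
          · rw [← hzj0]
            simp
        · refine ⟨q, Finset.mem_univ q, ?_⟩
          have := hkey q hqS
          rw [hMapp, hMapp, hMapp]
          nlinarith [hzq, this]
      rw [hPsupp p hzp, hPsupp q hzq] at hsum
      linarith
  -- conclusion
  have hlampos : 0 < lam := by
    rw [hlam, hPdef]
    apply Finset.sum_pos
    · intro j _
      exact mul_pos (hzpos j) (by rw [hMapp]; exact hGpos _ (abs_nonneg _))
    · exact ⟨j₀, Finset.mem_univ _⟩
  set wvec : Fin (N+1) → ℝ := fun i => z i / lam with hwvec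
  have hMw : M *ᵥ wvec = one := by
    funext i
    have h1 : (M *ᵥ wvec) i = ∑ j, M i j * wvec j := rfl
    rw [h1, hone]
    have h2 : ∀ j, M i j * wvec j = (z j * M i j) / lam := by
      intro j; rw [hwvec]; simp only; ring
    rw [Finset.sum_congr rfl (fun j _ => h2 j), ← Finset.sum_div]
    rw [show (∑ j, z j * M i j) = P i from rfl, hPsupp i (hzpos i)]
    field_simp
  have hinv : M⁻¹ *ᵥ one = wvec := by
    rw [← hMw, Matrix.mulVec_mulVec, Matrix.nonsing_inv_mul M hdet, Matrix.one_mulVec]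
  have hwpos : ∀ i, 0 < wvec i := fun i => div_pos (hzpos i) hlampos
  constructor
  · intro i
    rw [hinv]
    exact hwpos i
  · intro i
    rw [hξstar]
    simp only
    rw [hinv]
    have hdot1 : one ⬝ᵥ wvec = 1 / lam := by
      rw [hone]
      have h1 : (fun _ : Fin (N+1) => (1:ℝ)) ⬝ᵥ wvec = ∑ i, 1 * wvec i := rfl
      rw [h1]
      have h2 : ∀ i : Fin (N+1), 1 * wvec i = z i / lam := by
        intro i; rw [hwvec]; simp
      rw [Finset.sum_congr rfl (fun i _ => h2 i), ← Finset.sum_div, hzsum]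
    rw [hdot1]
    have hpos : 0 < X₀ / (1 / lam) * wvec i :=
      mul_pos (div_pos hX₀ (by positivity)) (hwpos i)
    linarith
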